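/- arXiv:1504.02268 — 2 statements merged into one kernel-verified Lean document; each statement's English description precedes it below -/
import Mathlib

section
/- Let G = (V,E) be a finite simple graph with n nodes, fix α ≥ 1, d ≥ 0, ε ∈ (0,1), L = 2 + ⌈log_{1+ε} n⌉, and let (Z_1, …, Z_L) be an (α, d, L)-decomposition. If d < d*/α (where d* is the maximum density), then there exists an index j ∈ {1, …, L−1} such that ρ(Z_j) ≥ d/(2(1+ε)). -/
open Finset
open scoped Classical

variable {V : Type*} [Fintype V] [DecidableEq V]

/-- Degree of `v` within the node set `S`: number of neighbors of `v` inside `S`. -/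
noncomputable def degIn (G : SimpleGraph V) (v : V) (S : Finset V) : ℕ :=
  (S.filter fun u => G.Adj v u).card

/-- The set of edges of `G` with both endpoints in `S`. -/
noncomputable def edgesIn (G : SimpleGraph V) (S : Finset V) : Finset (Sym2 V) :=
  G.edgeFinset.filter fun e => ∀ v ∈ e, v ∈ S

/-- Density of the subgraph induced by `S`: `|E(S)|/|S|`. -/
noncomputable def density (G : SimpleGraph V) (S : Finset V) : ℝ :=
  (edgesIn G S).card / S.card

/-- An `(α, d, L)`-decomposition of `G`: a chain `V = Z 1 ⊇ Z 2 ⊇ ⋯ ⊇ Z L` such that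
every node of `Z i` with degree `> α d` inside `Z i` is included in `Z (i+1)`, and
no node of `Z i` with degree `< d` inside `Z i` belongs to `Z (i+1)`. -/
def IsDecomp (G : SimpleGraph V) (α d : ℝ) (L : ℕ) (Z : ℕ → Finset V) : Prop :=
  Z 1 = Finset.univ ∧
  (∀ i, 1 ≤ i → i < L → Z (i + 1) ⊆ Z i) ∧
  (∀ i, 1 ≤ i → i < L → ∀ v ∈ Z i, α * d < (degIn G v (Z i) : ℝ) → v ∈ Z (i + 1)) ∧
  (∀ i, 1 ≤ i → i < L → ∀ v ∈ Z i, (degIn G v (Z i) : ℝ) < d → v ∉ Z (i + 1))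

set_option linter.unusedSectionVars false

def indG (G : SimpleGraph V) (S : Finset V) : SimpleGraph V where
  Adj u v := G.Adj u v ∧ u ∈ S ∧ v ∈ S
  symm := ⟨by rintro u v ⟨h, hu, hv⟩; exact ⟨h.symm, hv, hu⟩⟩
  loopless := ⟨by rintro v ⟨h, _⟩; exact G.irrefl h⟩

lemma edgeFinset_indG (G : SimpleGraph V) (S : Finset V) :
    (indG G S).edgeFinset = edgesIn G S := by
  ext e
  induction e with
  | _ u w =>
    rw [SimpleGraph.mem_edgeFinset]
    simp only [edgesIn, mem_filter, SimpleGraph.mem_edgeFinset, SimpleGraph.mem_edgeSet,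
      indG, Sym2.mem_iff]
    constructor
    · rintro ⟨h, hu, hw⟩
      exact ⟨h, by rintro x (rfl | rfl) <;> assumption⟩
    · rintro ⟨h, hx⟩
      exact ⟨h, hx u (Or.inl rfl), hx w (Or.inr rfl)⟩

lemma degree_indG (G : SimpleGraph V) {S : Finset V} {v : V} (hv : v ∈ S) :
    (indG G S).degree v = degIn G v S := by
  unfold degIn
  rw [← SimpleGraph.card_neighborFinset_eq_degree]
  congr 1
  ext u
  rw [SimpleGraph.mem_neighborFinset]
  simp [indG, hv, and_comm]

lemma degree_indG_zero (G : SimpleGraph V) {S : Finset V} {v : V} (hv : v ∉ S) :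
    (indG G S).degree v = 0 := by
  rw [← SimpleGraph.card_neighborFinset_eq_degree, card_eq_zero]
  ext u
  rw [SimpleGraph.mem_neighborFinset]
  simp [indG]
  tauto

lemma sum_degIn (G : SimpleGraph V) (S : Finset V) :
    ∑ v ∈ S, degIn G v S = 2 * (edgesIn G S).card := by
  rw [← edgeFinset_indG, ← SimpleGraph.sum_degrees_eq_twice_card_edges]
  rw [← Finset.sum_subset (subset_univ S)]
  · exact Finset.sum_congr rfl fun v hv => (degree_indG G hv).symm
  · intro v _ hv; exact degree_indG_zero G hv

lemma card_incident (G : SimpleGraph V) {S : Finset V} {v : V} (hv : v ∈ S) :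
    ((edgesIn G S).filter fun e => v ∈ e).card = degIn G v S := by
  rw [← edgeFinset_indG, ← SimpleGraph.incidenceFinset_eq_filter,
    SimpleGraph.card_incidenceFinset_eq_degree, degree_indG G hv]

lemma degIn_mono (G : SimpleGraph V) (v : V) {S T : Finset V} (h : S ⊆ T) :
    degIn G v S ≤ degIn G v T :=
  card_le_card (filter_subset_filter _ h)

lemma edgesIn_singleton (G : SimpleGraph V) (w : V) : edgesIn G {w} = ∅ := by
  ext e
  induction e with
  | _ u u' =>
    simp only [edgesIn, mem_filter, SimpleGraph.mem_edgeFinset, SimpleGraph.mem_edgeSet,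
      notMem_empty, iff_false, not_and]
    intro h hx
    have hu := hx u (Sym2.mem_mk_left u u')
    have hu' := hx u' (Sym2.mem_mk_right u u')
    rw [mem_singleton] at hu hu'
    exact G.ne_of_adj h (hu.trans hu'.symm)

lemma mindeg (G : SimpleGraph V) {S : Finset V} {dstar : ℝ} (hSne : S.Nonempty)
    (hub : ∀ T : Finset V, T.Nonempty → density G T ≤ dstar)
    (hdstar : dstar = density G S) (hpos : 0 < dstar) :
    ∀ v ∈ S, dstar ≤ (degIn G v S : ℝ) := by
  have hS2 : 2 ≤ S.card := by
    by_contra h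
    push_neg at h
    interval_cases hc : S.card
    · exact absurd (card_eq_zero.mp hc) hSne.ne_empty
    · obtain ⟨w, rfl⟩ := card_eq_one.mp hc
      rw [hdstar] at hpos
      simp [density, edgesIn_singleton] at hpos
  intro v hv
  set T := S.erase v with hT
  have hTcard : T.card = S.card - 1 := card_erase_of_mem hv
  have hTne : T.Nonempty := card_pos.mp (by omega)
  have hsub : (edgesIn G S).filter (fun e => ¬ v ∈ e) ⊆ edgesIn G T := by
    intro e he
    rw [mem_filter] at he
    obtain ⟨heS, hve⟩ := he
    rw [edgesIn, mem_filter] at heS ⊢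
    refine ⟨heS.1, fun x hx => ?_⟩
    exact mem_erase.mpr ⟨fun hxv => hve (hxv ▸ hx), heS.2 x hx⟩
  have hsplit : ((edgesIn G S).filter (fun e => v ∈ e)).card +
      ((edgesIn G S).filter (fun e => ¬ v ∈ e)).card = (edgesIn G S).card :=
    card_filter_add_card_filter_not _
  have hinc := card_incident G hv
  have hge : (edgesIn G S).card - degIn G v S ≤ (edgesIn G T).card := by
    have := card_le_card hsub
    omega
  have hub' := hub T hTne
  -- real arithmetic
  have hs1 : (1 : ℝ) ≤ (S.card : ℝ) := by exact_mod_cast hS2.trans' (by norm_num)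
  have hTcardR : (T.card : ℝ) = (S.card : ℝ) - 1 := by
    rw [hTcard, Nat.cast_sub (by omega)]; norm_num
  have hTpos : (0 : ℝ) < (T.card : ℝ) := by
    have : 1 ≤ T.card := hTne.card_pos
    exact_mod_cast this
  have hle : degIn G v S ≤ (edgesIn G S).card :=
    hinc ▸ card_le_card (filter_subset _ _)
  have hgeR : ((edgesIn G S).card : ℝ) - (degIn G v S : ℝ) ≤ ((edgesIn G T).card : ℝ) := by
    have h2 := (Nat.cast_le (α := ℝ)).mpr hge
    rw [Nat.cast_sub hle] at h2
    exact h2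
  have hdensT : density G T = ((edgesIn G T).card : ℝ) / (T.card : ℝ) := rfl
  have hdensS : dstar = ((edgesIn G S).card : ℝ) / (S.card : ℝ) := hdstar
  have hSpos : (0 : ℝ) < (S.card : ℝ) := by linarith
  have hds_e : dstar * (S.card : ℝ) = ((edgesIn G S).card : ℝ) := by
    rw [hdensS, div_mul_cancel₀ _ hSpos.ne']
  have hT_le : ((edgesIn G T).card : ℝ) ≤ dstar * ((S.card : ℝ) - 1) := by
    rw [hdensT] at hub'
    rw [div_le_iff₀ hTpos] at hub'
    rw [hTcardR] at hub'
    linarith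
  nlinarith [hgeR, hT_le, hds_e]

/-- If `d < d*/α`, then some level `j ∈ {1,…,L−1}` of an `(α,d,L)`-decomposition has
density at least `d/(2(1+ε))`. -/
theorem decomp_dense_level_exists (G : SimpleGraph V) (α d ε : ℝ)
    (hα : 1 ≤ α) (hd : 0 ≤ d) (hε0 : 0 < ε) (hε1 : ε < 1) (L : ℕ)
    (hL : (L : ℤ) = 2 + ⌈Real.logb (1 + ε) (Fintype.card V)⌉)
    (Z : ℕ → Finset V) (hZ : IsDecomp G α d L Z) (dstar : ℝ)
    (hds : IsGreatest {x : ℝ | ∃ S : Finset V, S.Nonempty ∧ x = density G S} dstar)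
    (hsmall : d < dstar / α) :
    ∃ j, 1 ≤ j ∧ j ≤ L - 1 ∧ d / (2 * (1 + ε)) ≤ density G (Z j) := by
  obtain ⟨hZ1, hZsub, hZin, hZout⟩ := hZ
  obtain ⟨⟨S, hSne, hdstar⟩, hub⟩ := hds
  have hn1 : 1 ≤ Fintype.card V := Fintype.card_pos_iff.mpr ⟨hSne.choose⟩
  have hε' : (1 : ℝ) < 1 + ε := by linarith
  have hlogb0 : 0 ≤ Real.logb (1 + ε) (Fintype.card V) :=
    Real.logb_nonneg hε' (by exact_mod_cast hn1)
  have hL2 : 2 ≤ L := by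
    have h2 : (2 : ℤ) ≤ (L : ℤ) := by
      rw [hL]
      have := Int.ceil_nonneg hlogb0
      omega
    exact_mod_cast h2
  have hα0 : (0 : ℝ) < α := lt_of_lt_of_le one_pos hα
  have hαd : α * d < dstar := by
    rw [lt_div_iff₀ hα0] at hsmall
    linarith [mul_comm d α]
  rcases eq_or_lt_of_le hd with hd0 | hdpos
  · exact ⟨1, le_refl 1, by omega,
      by rw [← hd0, zero_div]; exact div_nonneg (Nat.cast_nonneg _) (Nat.cast_nonneg _)⟩
  have hdspos : 0 < dstar := lt_of_lt_of_le hdpos (le_trans (le_mul_of_one_le_left hd hα) hαd.le)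
  by_contra hcon
  push_neg at hcon
  have h1ε : (0 : ℝ) < 1 + ε := by linarith
  -- Step A: each level shrinks by a factor (1+ε)
  have shrink : ∀ i, 1 ≤ i → i + 1 ≤ L →
      ((Z (i + 1)).card : ℝ) * (1 + ε) ≤ ((Z i).card : ℝ) := by
    intro i hi1 hiL
    have hiL' : i < L := hiL
    rcases (Z i).eq_empty_or_nonempty with hZe | hZne
    · have hZ' : Z (i + 1) = ∅ := subset_empty.mp (hZe ▸ hZsub i hi1 hiL')
      simp [hZ', hZe]
    · have hdens := hcon i hi1 (by omega)
      have hm : (0 : ℝ) < ((Z i).card : ℝ) := by exact_mod_cast hZne.card_pos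
      have hE : ((edgesIn G (Z i)).card : ℝ) < d / (2 * (1 + ε)) * ((Z i).card : ℝ) := by
        rw [density, div_lt_iff₀ hm] at hdens
        exact hdens
      set A := (Z i).filter (fun v => d ≤ (degIn G v (Z i) : ℝ)) with hA
      have hZA : Z (i + 1) ⊆ A := by
        intro v hv
        have hvZ : v ∈ Z i := hZsub i hi1 hiL' hv
        refine mem_filter.mpr ⟨hvZ, ?_⟩
        by_contra h
        push_neg at h
        exact hZout i hi1 hiL' v hvZ h hv
      have hAd : (A.card : ℝ) * d ≤ 2 * ((edgesIn G (Z i)).card : ℝ) := by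
        calc (A.card : ℝ) * d = ∑ _v ∈ A, d := by rw [sum_const, nsmul_eq_mul, mul_comm]
          _ ≤ ∑ v ∈ A, (degIn G v (Z i) : ℝ) := sum_le_sum fun v hv => (mem_filter.mp hv).2
          _ ≤ ∑ v ∈ Z i, (degIn G v (Z i) : ℝ) :=
              sum_le_sum_of_subset_of_nonneg (filter_subset _ _)
                (fun v _ _ => Nat.cast_nonneg _)
          _ = 2 * ((edgesIn G (Z i)).card : ℝ) := by exact_mod_cast sum_degIn G (Z i)
      have hcard : ((Z (i + 1)).card : ℝ) ≤ (A.card : ℝ) := by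
        exact_mod_cast card_le_card hZA
      have hkey : (A.card : ℝ) * d * (1 + ε) < d * ((Z i).card : ℝ) := by
        have h2 : 2 * ((edgesIn G (Z i)).card : ℝ) * (1 + ε) <
            d * ((Z i).card : ℝ) := by
          have := mul_lt_mul_of_pos_right hE h1ε
          calc 2 * ((edgesIn G (Z i)).card : ℝ) * (1 + ε)
              = 2 * (((edgesIn G (Z i)).card : ℝ) * (1 + ε)) := by ring
            _ < 2 * (d / (2 * (1 + ε)) * ((Z i).card : ℝ) * (1 + ε)) := by linarith
            _ = d * ((Z i).card : ℝ) := by field_simp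
        calc (A.card : ℝ) * d * (1 + ε) ≤ 2 * ((edgesIn G (Z i)).card : ℝ) * (1 + ε) :=
              mul_le_mul_of_nonneg_right hAd (by linarith)
          _ < d * ((Z i).card : ℝ) := h2
      have hA' : (A.card : ℝ) * (1 + ε) < ((Z i).card : ℝ) := by
        have hd2 : 0 < d := hdpos
        nlinarith [hkey]
      calc ((Z (i + 1)).card : ℝ) * (1 + ε) ≤ (A.card : ℝ) * (1 + ε) :=
            mul_le_mul_of_nonneg_right hcard (by linarith)
        _ ≤ ((Z i).card : ℝ) := hA'.le
  -- Step B: geometric decay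
  have bound : ∀ i, 1 ≤ i → i ≤ L →
      ((Z i).card : ℝ) * (1 + ε) ^ (i - 1) ≤ (Fintype.card V : ℝ) := by
    intro i
    induction i with
    | zero => omega
    | succ k ih =>
      intro h1 hL'
      rcases Nat.eq_zero_or_pos k with hk0 | hk1
      · subst hk0
        simp [hZ1]
      · have ihk := ih hk1 (by omega)
        have hs := shrink k hk1 (by omega)
        have hkeq : k = (k - 1) + 1 := by omega
        have hpowk : (1 + ε) ^ k = (1 + ε) * (1 + ε) ^ (k - 1) := by
          nth_rewrite 1 [hkeq]
          rw [pow_succ']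
        have hstep : ((Z (k + 1)).card : ℝ) * (1 + ε) ^ k ≤
            ((Z k).card : ℝ) * (1 + ε) ^ (k - 1) := by
          rw [hpowk, ← mul_assoc]
          exact mul_le_mul_of_nonneg_right hs (by positivity)
        simpa using hstep.trans ihk
  -- Step C: Z L is empty
  have hpow : (Fintype.card V : ℝ) < (1 + ε) ^ (L - 1) := by
    set x := Real.logb (1 + ε) (Fintype.card V) with hx
    have hb0 : (0 : ℝ) < 1 + ε := h1ε
    have hb1 : (1 + ε : ℝ) ≠ 1 := by linarith
    have hn0 : (0 : ℝ) < (Fintype.card V : ℝ) := by exact_mod_cast hn1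
    have hrpow : (1 + ε : ℝ) ^ (x : ℝ) = (Fintype.card V : ℝ) :=
      Real.rpow_logb hb0 hb1 hn0
    have hcast : (((L - 1 : ℕ) : ℝ)) = 1 + (⌈x⌉ : ℝ) := by
      have hz : ((L - 1 : ℕ) : ℤ) = 1 + ⌈x⌉ := by
        rw [Nat.cast_sub (by omega)]
        omega
      exact_mod_cast hz
    have hxlt : x < ((L - 1 : ℕ) : ℝ) := by
      rw [hcast]
      have := Int.le_ceil x
      linarith
    have : (1 + ε : ℝ) ^ (x : ℝ) < (1 + ε : ℝ) ^ (((L - 1 : ℕ) : ℝ)) :=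
      Real.rpow_lt_rpow_left_iff hε' |>.mpr hxlt
    rw [hrpow, Real.rpow_natCast] at this
    exact this
  have hZL : Z L = ∅ := by
    have hb := bound L (by omega) le_rfl
    have hpos : (0 : ℝ) < (1 + ε) ^ (L - 1) := by positivity
    by_contra hne
    have h1 : (1 : ℝ) ≤ ((Z L).card : ℝ) := by
      have := (nonempty_iff_ne_empty.mpr hne).card_pos
      exact_mod_cast this
    nlinarith [hb, hpow, hpos, h1]
  -- Step D: densest set survives all levels
  have hd_deg : ∀ v ∈ S, dstar ≤ (degIn G v S : ℝ) :=
    mindeg G hSne (fun T hT => hub ⟨T, hT, rfl⟩) hdstar hdspos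
  have hSZ : ∀ i, 1 ≤ i → i ≤ L → S ⊆ Z i := by
    intro i
    induction i with
    | zero => omega
    | succ k ih =>
      intro h1 hL'
      rcases Nat.eq_zero_or_pos k with hk0 | hk1
      · subst hk0
        rw [hZ1]
        exact subset_univ S
      · have hk := ih hk1 (by omega)
        intro v hv
        refine hZin k hk1 (by omega) v (hk hv) ?_
        have h1' : (degIn G v S : ℝ) ≤ (degIn G v (Z k) : ℝ) := by
          exact_mod_cast degIn_mono G v hk
        linarith [hd_deg v hv]
  obtain ⟨v, hv⟩ := hSne
  have := hSZ L (by omega) le_rfl hv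
  rw [hZL] at this
  exact absurd this (notMem_empty v)
end

section
/- Let G = (V,E) be a directed graph with n = |V|, fix α ≥ 1, ε ∈ (0,1), d_S, d_T ≥ 0, and L = 2·(2 + ⌈log_{1+ε} n⌉). Let ((S_1,…,S_L),(T_1,…,T_L)) be an (α, d_S, d_T, L)-decomposition. If d_S·d_T > 4(1+ε)·λ_S·λ_T (with λ_S, λ_T as in the densest-pair min-degree bounds, so that ρ*(G) ≤ 2√(λ_S λ_T)), then S_L = ∅ and T_L = ∅. -/
open Finset
open scoped Classical

variable {V : Type*} [Fintype V] [DecidableEq V]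

/-- The set of directed edges of the relation `R` going from `S` to `T`. -/
noncomputable def edgesBtw (R : V → V → Prop) (S T : Finset V) : Finset (V × V) :=
  (S ×ˢ T).filter fun p => R p.1 p.2

/-- Out-degree of `s` into the node set `T`. -/
noncomputable def outDeg (R : V → V → Prop) (s : V) (T : Finset V) : ℕ :=
  (T.filter fun t => R s t).card

/-- In-degree of `t` from the node set `S`. -/
noncomputable def inDeg (R : V → V → Prop) (t : V) (S : Finset V) : ℕ :=
  (S.filter fun s => R s t).card

/-- Directed density `ρ(S,T) = |E(S,T)| / √(|S|·|T|)`. -/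
noncomputable def rhoD (R : V → V → Prop) (S T : Finset V) : ℝ :=
  (edgesBtw R S T).card / Real.sqrt ((S.card : ℝ) * T.card)

/-- An `(α, d_S, d_T, L)`-decomposition of a directed graph `R`. -/
def IsDirDecomp (R : V → V → Prop) (α dS dT : ℝ) (L : ℕ) (S T : ℕ → Finset V) : Prop :=
  S 1 = Finset.univ ∧ T 1 = Finset.univ ∧
  (∀ i, 1 ≤ i → i < L → S (i + 1) ⊆ S i ∧ T (i + 1) ⊆ T i) ∧
  (∀ i, 1 ≤ i → i < L → ∀ s ∈ S i, α * dS < (outDeg R s (T i) : ℝ) → s ∈ S (i + 1)) ∧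
  (∀ i, 1 ≤ i → i < L → ∀ s ∈ S i, (outDeg R s (T i) : ℝ) < dS → s ∉ S (i + 1)) ∧
  (∀ i, 1 ≤ i → i < L → ∀ t ∈ T i, α * dT < (inDeg R t (S i) : ℝ) → t ∈ T (i + 1)) ∧
  (∀ i, 1 ≤ i → i < L → ∀ t ∈ T i, (inDeg R t (S i) : ℝ) < dT → t ∉ T (i + 1))

set_option linter.unusedSectionVars false in
lemma card_edgesBtw_out (R : V → V → Prop) (S T : Finset V) :
    (edgesBtw R S T).card = ∑ s ∈ S, outDeg R s T := by
  classical
  unfold edgesBtw outDeg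
  rw [Finset.card_filter, Finset.sum_product]
  exact Finset.sum_congr rfl fun s _ => (Finset.card_filter _ _).symm

set_option linter.unusedSectionVars false in
lemma card_edgesBtw_in (R : V → V → Prop) (S T : Finset V) :
    (edgesBtw R S T).card = ∑ t ∈ T, inDeg R t S := by
  classical
  unfold edgesBtw inDeg
  rw [Finset.card_filter, Finset.sum_product_right]
  exact Finset.sum_congr rfl fun t _ => (Finset.card_filter _ _).symm

set_option maxHeartbeats 1000000 in
/-- If `d_S·d_T > 4(1+ε)·λ_S·λ_T`, the topmost level of an
`(α, d_S, d_T, L)`-decomposition is empty. -/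
theorem directed_decomp_top_level_empty (R : V → V → Prop) (α dS dT ε : ℝ)
    (hα : 1 ≤ α) (hε0 : 0 < ε) (hε1 : ε < 1) (hdS : 0 ≤ dS) (hdT : 0 ≤ dT) (L : ℕ)
    (hL : (L : ℤ) = 2 * (2 + ⌈Real.logb (1 + ε) (Fintype.card V)⌉))
    (S T : ℕ → Finset V) (hdec : IsDirDecomp R α dS dT L S T)
    (Sstar Tstar : Finset V) (hSne : Sstar.Nonempty) (hTne : Tstar.Nonempty)
    (hmax : ∀ A B : Finset V, A.Nonempty → B.Nonempty →
      rhoD R A B ≤ rhoD R Sstar Tstar)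
    (lamS lamT : ℝ)
    (hlS : lamS = ((edgesBtw R Sstar Tstar).card : ℝ) *
      (1 - Real.sqrt (1 - 1 / Sstar.card)))
    (hlT : lamT = ((edgesBtw R Sstar Tstar).card : ℝ) *
      (1 - Real.sqrt (1 - 1 / Tstar.card)))
    (hbig : 4 * (1 + ε) * (lamS * lamT) < dS * dT) :
    S L = ∅ ∧ T L = ∅ := by
  
  classical
  obtain ⟨hS1, hT1, hchain, _, hSdel, _, hTdel⟩ := hdec
  obtain ⟨ρ, hρdef⟩ : ∃ r : ℝ, r = rhoD R Sstar Tstar := ⟨_, rfl⟩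
  rw [← hρdef] at hmax
  have hε' : (1:ℝ) < 1 + ε := by linarith
  have hεpos : (0:ℝ) < 1 + ε := by linarith
  -- positivity of lamS, lamT
  have hE0 : (0:ℝ) ≤ ((edgesBtw R Sstar Tstar).card : ℝ) := by positivity
  have haS : (1:ℝ) ≤ (Sstar.card : ℝ) := by
    exact_mod_cast Finset.card_pos.mpr hSne
  have haT : (1:ℝ) ≤ (Tstar.card : ℝ) := by
    exact_mod_cast Finset.card_pos.mpr hTne
  have hfacS : (0:ℝ) ≤ 1 - Real.sqrt (1 - 1 / Sstar.card) := by
    have h0 : (0:ℝ) < 1 / (Sstar.card:ℝ) := by positivity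
    have : Real.sqrt (1 - 1 / (Sstar.card:ℝ)) ≤ 1 := Real.sqrt_le_one.mpr (by linarith)
    linarith
  have hfacT : (0:ℝ) ≤ 1 - Real.sqrt (1 - 1 / Tstar.card) := by
    have h0 : (0:ℝ) < 1 / (Tstar.card:ℝ) := by positivity
    have : Real.sqrt (1 - 1 / (Tstar.card:ℝ)) ≤ 1 := Real.sqrt_le_one.mpr (by linarith)
    linarith
  have hlamS0 : 0 ≤ lamS := by rw [hlS]; positivity
  have hlamT0 : 0 ≤ lamT := by rw [hlT]; positivity
  have hdSdT : 0 < dS * dT := lt_of_le_of_lt (by positivity) hbig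
  have hdS0 : 0 < dS := by
    rcases mul_pos_iff.mp hdSdT with ⟨h, _⟩ | ⟨h, _⟩
    · exact h
    · linarith
  have hdT0 : 0 < dT := by
    rcases mul_pos_iff.mp hdSdT with ⟨_, h⟩ | ⟨_, h⟩
    · exact h
    · linarith
  -- Step A : ρ² ≤ 4 lamS lamT
  have hρ0 : 0 ≤ ρ := by
    rw [hρdef]; unfold rhoD; positivity
  have hsqS : Real.sqrt (1 - 1 / (Sstar.card:ℝ)) ≤ 1 - 1 / (2 * Sstar.card) := by
    have ha0 : (0:ℝ) < (Sstar.card:ℝ) := by linarith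
    have hx0 : (0:ℝ) < 1 / (Sstar.card:ℝ) := by positivity
    have hx1 : 1 / (Sstar.card:ℝ) ≤ 1 := by
      rw [div_le_one ha0]; linarith
    have heq : 1 / (2 * (Sstar.card:ℝ)) = (1 / (Sstar.card:ℝ)) / 2 := by
      field_simp
    rw [heq, Real.sqrt_le_iff]
    constructor
    · linarith
    · nlinarith
  have hsqT : Real.sqrt (1 - 1 / (Tstar.card:ℝ)) ≤ 1 - 1 / (2 * Tstar.card) := by
    have ha0 : (0:ℝ) < (Tstar.card:ℝ) := by linarith
    have hx0 : (0:ℝ) < 1 / (Tstar.card:ℝ) := by positivity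
    have hx1 : 1 / (Tstar.card:ℝ) ≤ 1 := by
      rw [div_le_one ha0]; linarith
    have heq : 1 / (2 * (Tstar.card:ℝ)) = (1 / (Tstar.card:ℝ)) / 2 := by
      field_simp
    rw [heq, Real.sqrt_le_iff]
    constructor
    · linarith
    · nlinarith
  have hlamS1 : ((edgesBtw R Sstar Tstar).card : ℝ) ≤ 2 * Sstar.card * lamS := by
    rw [hlS]
    have h1 : 1 / (2 * (Sstar.card:ℝ)) ≤ 1 - Real.sqrt (1 - 1 / Sstar.card) := by
      linarith
    calc ((edgesBtw R Sstar Tstar).card : ℝ)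
        = 2 * Sstar.card * (((edgesBtw R Sstar Tstar).card : ℝ) * (1 / (2 * Sstar.card))) := by
          field_simp
      _ ≤ 2 * Sstar.card * (((edgesBtw R Sstar Tstar).card : ℝ) * (1 - Real.sqrt (1 - 1 / Sstar.card))) := by
          apply mul_le_mul_of_nonneg_left _ (by positivity)
          exact mul_le_mul_of_nonneg_left h1 hE0
  have hlamT1 : ((edgesBtw R Sstar Tstar).card : ℝ) ≤ 2 * Tstar.card * lamT := by
    rw [hlT]
    have h1 : 1 / (2 * (Tstar.card:ℝ)) ≤ 1 - Real.sqrt (1 - 1 / Tstar.card) := by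
      linarith
    calc ((edgesBtw R Sstar Tstar).card : ℝ)
        = 2 * Tstar.card * (((edgesBtw R Sstar Tstar).card : ℝ) * (1 / (2 * Tstar.card))) := by
          field_simp
      _ ≤ 2 * Tstar.card * (((edgesBtw R Sstar Tstar).card : ℝ) * (1 - Real.sqrt (1 - 1 / Tstar.card))) := by
          apply mul_le_mul_of_nonneg_left _ (by positivity)
          exact mul_le_mul_of_nonneg_left h1 hE0
  have hρsq : ρ ^ 2 = ((edgesBtw R Sstar Tstar).card : ℝ) ^ 2 / ((Sstar.card:ℝ) * Tstar.card) := by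
    rw [hρdef]; unfold rhoD
    rw [div_pow, Real.sq_sqrt (by positivity)]
  have hA : ρ ^ 2 ≤ 4 * (lamS * lamT) := by
    have h := mul_le_mul hlamS1 hlamT1 hE0
      (by positivity : (0:ℝ) ≤ 2 * (Sstar.card:ℝ) * lamS)
    rw [hρsq, div_le_iff₀ (by positivity : (0:ℝ) < (Sstar.card:ℝ) * Tstar.card)]
    calc ((edgesBtw R Sstar Tstar).card : ℝ) ^ 2
        = ((edgesBtw R Sstar Tstar).card : ℝ) * ((edgesBtw R Sstar Tstar).card : ℝ) := sq _
      _ ≤ 2 * Sstar.card * lamS * (2 * Tstar.card * lamT) := h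
      _ = 4 * (lamS * lamT) * ((Sstar.card:ℝ) * Tstar.card) := by ring
  have hkey : ρ ^ 2 * (1 + ε) ≤ dS * dT := by
    have h1 : ρ ^ 2 * (1 + ε) ≤ 4 * (lamS * lamT) * (1 + ε) :=
      mul_le_mul_of_nonneg_right hA (le_of_lt hεpos)
    have h2 : 4 * (lamS * lamT) * (1 + ε) = 4 * (1 + ε) * (lamS * lamT) := by ring
    linarith
  -- Step B : density bound for nonempty pairs
  have hub : ∀ A B : Finset V, A.Nonempty → B.Nonempty →
      ((edgesBtw R A B).card : ℝ) ≤ ρ * Real.sqrt ((A.card:ℝ) * B.card) := by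
    intro A B hA hB
    have hcard : (0:ℝ) < Real.sqrt ((A.card:ℝ) * B.card) := by
      apply Real.sqrt_pos.mpr
      have h1 : (1:ℝ) ≤ (A.card:ℝ) := by exact_mod_cast Finset.card_pos.mpr hA
      have h2 : (1:ℝ) ≤ (B.card:ℝ) := by exact_mod_cast Finset.card_pos.mpr hB
      have h3 : (1:ℝ) * 1 ≤ (A.card:ℝ) * B.card := mul_le_mul h1 h2 one_pos.le (by linarith)
      linarith
    have h := hmax A B hA hB
    unfold rhoD at h
    rw [div_le_iff₀ hcard] at h
    exact h
  -- chains
  have hmonoS : ∀ i j, 1 ≤ i → i ≤ j → j ≤ L → S j ⊆ S i := by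
    intro i j h1 hij hjL
    induction j, hij using Nat.le_induction with
    | base => exact Finset.Subset.refl _
    | succ j hij ih =>
      exact (hchain j (le_trans h1 hij) (by omega)).1.trans (ih (by omega))
  have hmonoT : ∀ i j, 1 ≤ i → i ≤ j → j ≤ L → T j ⊆ T i := by
    intro i j h1 hij hjL
    induction j, hij using Nat.le_induction with
    | base => exact Finset.Subset.refl _
    | succ j hij ih =>
      exact (hchain j (le_trans h1 hij) (by omega)).2.trans (ih (by omega))
  -- L ≥ 4
  have hnV : (Fintype.card V : ℝ) = (Fintype.card V : ℝ) := rfl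
  have hc0 : (0:ℤ) ≤ ⌈Real.logb (1 + ε) (Fintype.card V)⌉ := by
    rcases Nat.eq_zero_or_pos (Fintype.card V) with h | h
    · simp [h]
    · apply Int.ceil_nonneg
      apply Real.logb_nonneg hε'
      exact_mod_cast h
  have hL4 : 4 ≤ L := by omega
  -- the main contradiction
  have habs : ¬ ((S L).Nonempty ∨ (T L).Nonempty) := by
    rintro hne
    -- V nonempty, n ≥ 1
    have hVne : 1 ≤ Fintype.card V := by
      rcases hne with ⟨x, _⟩ | ⟨x, _⟩ <;> exact Fintype.card_pos_iff.mpr ⟨x⟩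
    -- all levels up to L-1 are nonempty on both sides
    have hne' : ∀ k, 1 ≤ k → k ≤ L - 1 → (S k).Nonempty ∧ (T k).Nonempty := by
      rcases hne with hSL | hTL
      · intro k hk1 hkL
        have hSk : ∀ m, 1 ≤ m → m ≤ L → (S m).Nonempty := fun m h1 h2 =>
          hSL.mono (hmonoS m L h1 h2 le_rfl)
        refine ⟨hSk k hk1 (by omega), ?_⟩
        by_contra hT
        rw [Finset.not_nonempty_iff_eq_empty] at hT
        obtain ⟨s, hs⟩ := hSk (k + 1) (by omega) (by omega)
        have hsk : s ∈ S k := (hchain k hk1 (by omega)).1 hs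
        have : (outDeg R s (T k) : ℝ) < dS := by
          unfold outDeg; rw [hT]; simpa using hdS0
        exact hSdel k hk1 (by omega) s hsk this hs
      · intro k hk1 hkL
        have hTk : ∀ m, 1 ≤ m → m ≤ L → (T m).Nonempty := fun m h1 h2 =>
          hTL.mono (hmonoT m L h1 h2 le_rfl)
        refine ⟨?_, hTk k hk1 (by omega)⟩
        by_contra hS
        rw [Finset.not_nonempty_iff_eq_empty] at hS
        obtain ⟨t, ht⟩ := hTk (k + 1) (by omega) (by omega)
        have htk : t ∈ T k := (hchain k hk1 (by omega)).2 ht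
        have : (inDeg R t (S k) : ℝ) < dT := by
          unfold inDeg; rw [hS]; simpa using hdT0
        exact hTdel k hk1 (by omega) t htk this ht
    -- product sizes
    set P : ℕ → ℝ := fun k => ((S k).card : ℝ) * ((T k).card : ℝ) with hPdef
    have hP1 : ∀ k, 1 ≤ k → k ≤ L - 1 → 1 ≤ P k := by
      intro k h1 h2
      obtain ⟨hSk, hTk⟩ := hne' k h1 h2
      have a : (1:ℝ) ≤ ((S k).card : ℝ) := by exact_mod_cast Finset.card_pos.mpr hSk
      have b : (1:ℝ) ≤ ((T k).card : ℝ) := by exact_mod_cast Finset.card_pos.mpr hTk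
      simp only [hPdef]
      calc (1:ℝ) = 1 * 1 := by norm_num
        _ ≤ _ := mul_le_mul a b zero_le_one (zero_le_one.trans a)
    -- the contraction step
    have hstep : ∀ k, 1 ≤ k → k + 2 ≤ L → (1 + ε) ^ 2 * P (k + 1) ≤ P k := by
      intro k hk1 hk2
      obtain ⟨hSk, hTk⟩ := hne' k hk1 (by omega)
      obtain ⟨hSk1, hTk1⟩ := hne' (k + 1) (by omega) (by omega)
      have ha0 : (1:ℝ) ≤ ((S k).card : ℝ) := by exact_mod_cast Finset.card_pos.mpr hSk
      have hb0 : (1:ℝ) ≤ ((T k).card : ℝ) := by exact_mod_cast Finset.card_pos.mpr hTk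
      have ha1 : (1:ℝ) ≤ ((S (k+1)).card : ℝ) := by exact_mod_cast Finset.card_pos.mpr hSk1
      have hb1 : (1:ℝ) ≤ ((T (k+1)).card : ℝ) := by exact_mod_cast Finset.card_pos.mpr hTk1
      set a0 : ℝ := ((S k).card : ℝ)
      set b0 : ℝ := ((T k).card : ℝ)
      set a1 : ℝ := ((S (k+1)).card : ℝ)
      set b1 : ℝ := ((T (k+1)).card : ℝ)
      -- lower bound on E(S_{k+1}, T_k)
      have hlow1 : a1 * dS ≤ ((edgesBtw R (S (k+1)) (T k)).card : ℝ) := by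
        rw [card_edgesBtw_out]
        push_cast
        calc a1 * dS = ∑ _s ∈ S (k+1), dS := by
              rw [Finset.sum_const, nsmul_eq_mul]
          _ ≤ ∑ s ∈ S (k+1), (outDeg R s (T k) : ℝ) := by
              apply Finset.sum_le_sum
              intro s hs
              by_contra hlt
              push_neg at hlt
              exact hSdel k hk1 (by omega) s ((hchain k hk1 (by omega)).1 hs) hlt hs
      have hlow2 : b1 * dT ≤ ((edgesBtw R (S k) (T (k+1))).card : ℝ) := by
        rw [card_edgesBtw_in]
        push_cast
        calc b1 * dT = ∑ _t ∈ T (k+1), dT := by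
              rw [Finset.sum_const, nsmul_eq_mul]
          _ ≤ ∑ t ∈ T (k+1), (inDeg R t (S k) : ℝ) := by
              apply Finset.sum_le_sum
              intro t ht
              by_contra hlt
              push_neg at hlt
              exact hTdel k hk1 (by omega) t ((hchain k hk1 (by omega)).2 ht) hlt ht
      have hup1 : ((edgesBtw R (S (k+1)) (T k)).card : ℝ) ≤ ρ * Real.sqrt (a1 * b0) :=
        hub _ _ hSk1 hTk
      have hup2 : ((edgesBtw R (S k) (T (k+1))).card : ℝ) ≤ ρ * Real.sqrt (a0 * b1) :=
        hub _ _ hSk hTk1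
      have h1 : a1 * dS ≤ ρ * Real.sqrt (a1 * b0) := le_trans hlow1 hup1
      have h2 : b1 * dT ≤ ρ * Real.sqrt (a0 * b1) := le_trans hlow2 hup2
      set u : ℝ := Real.sqrt (a1 * b1) with hu
      set v : ℝ := Real.sqrt (a0 * b0) with hv
      have hu2 : u ^ 2 = a1 * b1 := Real.sq_sqrt (mul_nonneg (by linarith) (by linarith))
      have hv2 : v ^ 2 = a0 * b0 := Real.sq_sqrt (mul_nonneg (by linarith) (by linarith))
      have h11 : (1:ℝ) ≤ a1 * b1 := by
        calc (1:ℝ) = 1 * 1 := by norm_num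
          _ ≤ a1 * b1 := mul_le_mul ha1 hb1 zero_le_one (zero_le_one.trans ha1)
      have hupos : 1 ≤ u := by
        rw [hu]
        calc (1:ℝ) = Real.sqrt 1 := Real.sqrt_one.symm
          _ ≤ Real.sqrt (a1 * b1) := Real.sqrt_le_sqrt h11
      have hvpos : 0 ≤ v := Real.sqrt_nonneg _
      -- multiply
      have h3 : (a1 * b1) * (dS * dT) ≤ ρ ^ 2 * (u * v) := by
        have hmm := mul_le_mul h1 h2 (mul_nonneg (by linarith) (by linarith))
          (mul_nonneg hρ0 (Real.sqrt_nonneg _))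
        have hsplit : Real.sqrt (a1 * b0) * Real.sqrt (a0 * b1) = u * v := by
          rw [hu, hv,
            ← Real.sqrt_mul (mul_nonneg (by linarith) (by linarith) : (0:ℝ) ≤ a1 * b0) (a0 * b1),
            ← Real.sqrt_mul (mul_nonneg (by linarith) (by linarith) : (0:ℝ) ≤ a1 * b1) (a0 * b0)]
          congr 1
          ring
        calc (a1 * b1) * (dS * dT) = (a1 * dS) * (b1 * dT) := by ring
          _ ≤ (ρ * Real.sqrt (a1 * b0)) * (ρ * Real.sqrt (a0 * b1)) := hmm
          _ = ρ ^ 2 * (Real.sqrt (a1 * b0) * Real.sqrt (a0 * b1)) := by ring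
          _ = ρ ^ 2 * (u * v) := by rw [hsplit]
      -- use hkey
      have h4 : (1 + ε) * u ^ 2 ≤ u * v := by
        have hρuv : (0:ℝ) ≤ ρ ^ 2 * (u * v) :=
          mul_nonneg (sq_nonneg _) (mul_nonneg (by linarith) hvpos)
        have h5 : (1 + ε) * ((a1 * b1) * (dS * dT)) ≤ (dS * dT) * (u * v) := by
          calc (1 + ε) * ((a1 * b1) * (dS * dT)) ≤ (1 + ε) * (ρ ^ 2 * (u * v)) := by
                apply mul_le_mul_of_nonneg_left h3 (le_of_lt hεpos)
            _ = (ρ ^ 2 * (1 + ε)) * (u * v) := by ring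
            _ ≤ (dS * dT) * (u * v) := by
                apply mul_le_mul_of_nonneg_right hkey
                  (mul_nonneg (by linarith) hvpos)
        rw [hu2]
        have h5' : ((1 + ε) * (a1 * b1)) * (dS * dT) ≤ (u * v) * (dS * dT) := by
          calc ((1 + ε) * (a1 * b1)) * (dS * dT) = (1 + ε) * ((a1 * b1) * (dS * dT)) := by ring
            _ ≤ (dS * dT) * (u * v) := h5
            _ = (u * v) * (dS * dT) := by ring
        exact le_of_mul_le_mul_right h5' hdSdT
      have h6 : (1 + ε) * u ≤ v := by
        have hup : (0:ℝ) < u := by linarith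
        refine le_of_mul_le_mul_left ?_ hup
        calc u * ((1 + ε) * u) = (1 + ε) * u ^ 2 := by ring
          _ ≤ u * v := h4
      show (1 + ε) ^ 2 * P (k + 1) ≤ P k
      have : P (k + 1) = u ^ 2 := by simp only [hPdef]; rw [hu2]
      rw [this]
      have : P k = v ^ 2 := by simp only [hPdef]; rw [hv2]
      rw [this]
      have hl : (0:ℝ) ≤ (1 + ε) * u := mul_nonneg (le_of_lt hεpos) (by linarith)
      calc (1 + ε) ^ 2 * u ^ 2 = ((1 + ε) * u) * ((1 + ε) * u) := by ring
        _ ≤ v * v := mul_self_le_mul_self hl h6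
        _ = v ^ 2 := (sq v).symm
    -- iterate
    have hiter : ∀ j, j + 2 ≤ L → (1 + ε) ^ (2 * j) * P (j + 1) ≤ P 1 := by
      intro j
      induction j with
      | zero => intro _; simp
      | succ j ih =>
        intro hj
        have step := hstep (j + 1) (by omega) (by omega)
        calc (1 + ε) ^ (2 * (j + 1)) * P (j + 1 + 1)
            = (1 + ε) ^ (2 * j) * ((1 + ε) ^ 2 * P (j + 2)) := by ring
          _ ≤ (1 + ε) ^ (2 * j) * P (j + 1) := by
              apply mul_le_mul_of_nonneg_left step (by positivity)
          _ ≤ P 1 := ih (by omega)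
    have hfin : (1 + ε) ^ (2 * (L - 2)) ≤ P 1 := by
      have h := hiter (L - 2) (by omega)
      have hPk : 1 ≤ P (L - 2 + 1) := hP1 (L - 2 + 1) (by omega) (by omega)
      have hp := pow_pos hεpos (2 * (L - 2))
      calc (1 + ε) ^ (2 * (L - 2)) = (1 + ε) ^ (2 * (L - 2)) * 1 := (mul_one _).symm
        _ ≤ (1 + ε) ^ (2 * (L - 2)) * P (L - 2 + 1) :=
            mul_le_mul_of_nonneg_left hPk (le_of_lt hp)
        _ ≤ P 1 := h
    -- but P 1 = n²
    have hP1n : P 1 = (Fintype.card V : ℝ) ^ 2 := by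
      simp only [hPdef, hS1, hT1, Finset.card_univ]; ring
    -- and n² < (1+ε)^(2(L-2))
    set c : ℝ := Real.logb (1 + ε) (Fintype.card V) with hcdef
    have hceil : c ≤ (⌈c⌉ : ℝ) := Int.le_ceil c
    have hc0' : 0 ≤ c := Real.logb_nonneg hε' (by exact_mod_cast hVne)
    have hLr : ((2 * (L - 2) : ℕ) : ℝ) = 4 + 4 * (⌈c⌉ : ℝ) := by
      have hZ : ((2 * (L - 2) : ℕ) : ℤ) = 4 + 4 * ⌈c⌉ := by omega
      exact_mod_cast congrArg (fun z : ℤ => (z : ℝ)) hZ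
    have hn2 : (Fintype.card V : ℝ) ^ 2 < (1 + ε) ^ (2 * (L - 2)) := by
      have hnpos : (0:ℝ) < (Fintype.card V : ℝ) := by exact_mod_cast hVne
      have hrpow : (Fintype.card V : ℝ) ^ 2 = (1 + ε) ^ (c * 2 : ℝ) := by
        rw [Real.rpow_mul (le_of_lt hεpos), Real.rpow_logb hεpos (by linarith) hnpos]
        norm_num [Real.rpow_natCast]
      rw [hrpow, ← Real.rpow_natCast (1 + ε) (2 * (L - 2))]
      rw [Real.rpow_lt_rpow_left_iff hε']
      rw [hLr]
      linarith
    rw [hP1n] at hfin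
    linarith
  push_neg at habs
  obtain ⟨h1, h2⟩ := habs
  exact ⟨h1, h2⟩
end
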